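/- Define F_AP(S) = (1/n) Σ_{i∈V} p_i^T(S). Under the edge-addition transition model, F_AP is a normalized (F_AP(∅) = 0, assuming no edges to n exist in G), non-decreasing, submodular set function on subsets of V. -/

import Mathlib

open Finset

variable {V : Type*}

/-- Edge-addition transition kernel on `Option V`, where `none` is the target node `n`.
For `i ∈ S`, node `i` gets an extra edge of weight `wc` to the target. -/
noncomputable def ker [Fintype V] [DecidableEq V] (w : V → V → ℝ) (wc : ℝ) (S : Finset V) :
    Option V → Option V → ℝ
  | some i, some k => if i ∈ S then w i k / (wc + ∑ j, w i j) else w i k / (∑ j, w i j)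
  | some i, none => if i ∈ S then wc / (wc + ∑ j, w i j) else 0
  | none, none => 1
  | none, some _ => 0

/-- Truncated absorbing probability of the target (`none`) under the edge-addition model. -/
noncomputable def AP [Fintype V] [DecidableEq V] (w : V → V → ℝ) (wc : ℝ) (S : Finset V) :
    ℕ → Option V → ℝ
  | 0, x => if x = none then 1 else 0
  | _ + 1, none => 1
  | t + 1, some i => ∑ k, ker w wc S (some i) k * AP w wc S t k

/-- Truncated hitting time of the target (`none`) under the edge-addition model. -/
noncomputable def HT [Fintype V] [DecidableEq V] (w : V → V → ℝ) (wc : ℝ) (S : Finset V) :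
    ℕ → Option V → ℝ
  | 0, _ => 0
  | _ + 1, none => 0
  | t + 1, some i => 1 + ∑ k, ker w wc S (some i) k * HT w wc S t k

section Aux

variable [Fintype V] [DecidableEq V] {w : V → V → ℝ} {wc : ℝ}

lemma AP_succ_some (S : Finset V) (t : ℕ) (i : V) :
    AP w wc S (t+1) (some i) = ∑ k, ker w wc S (some i) k * AP w wc S t k := rfl

lemma AP_none (S : Finset V) (t : ℕ) : AP w wc S t none = 1 := by cases t <;> rfl

lemma AP_succ_some' (S : Finset V) (t : ℕ) (i : V) :
    AP w wc S (t+1) (some i) =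
      ker w wc S (some i) none + ∑ k : V, ker w wc S (some i) (some k) * AP w wc S t (some k) := by
  rw [AP_succ_some, Fintype.sum_option, AP_none, mul_one]

lemma ker_nonneg (hw : ∀ i j, 0 < w i j) (hwc : 0 < wc) (hd : ∀ i, 0 < ∑ j, w i j)
    (S : Finset V) (x y : Option V) : 0 ≤ ker w wc S x y := by
  match x, y with
  | some i, some k =>
    have h1 := hd i
    simp only [ker]
    split
    · exact div_nonneg (hw i k).le (by linarith)
    · exact div_nonneg (hw i k).le h1.le
  | some i, none =>
    have h1 := hd i
    simp only [ker]
    split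
    · exact div_nonneg hwc.le (by linarith)
    · exact le_refl 0
  | none, none => norm_num [ker]
  | none, some _ => norm_num [ker]

lemma AP_nonneg (hw : ∀ i j, 0 < w i j) (hwc : 0 < wc) (hd : ∀ i, 0 < ∑ j, w i j)
    (S : Finset V) : ∀ t x, 0 ≤ AP w wc S t x := by
  intro t
  induction t with
  | zero =>
    intro x
    cases x <;> simp [AP]
  | succ t ih =>
    intro x
    cases x with
    | none => rw [AP_none]; norm_num
    | some i =>
      rw [AP_succ_some]
      exact Finset.sum_nonneg fun k _ => mul_nonneg (ker_nonneg hw hwc hd S _ k) (ih k)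

lemma ker_rowsum (hw : ∀ i j, 0 < w i j) (hwc : 0 < wc) (hd : ∀ i, 0 < ∑ j, w i j)
    (S : Finset V) (i : V) : ∑ k : Option V, ker w wc S (some i) k = 1 := by
  rw [Fintype.sum_option]
  by_cases hi : i ∈ S
  · have h1 := hd i
    simp only [ker, if_pos hi, ← Finset.sum_div]
    rw [← add_div, div_self]
    linarith
  · simp only [ker, if_neg hi, ← Finset.sum_div]
    rw [zero_add, div_self (hd i).ne']

lemma AP_le_one (hw : ∀ i j, 0 < w i j) (hwc : 0 < wc) (hd : ∀ i, 0 < ∑ j, w i j)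
    (S : Finset V) : ∀ t x, AP w wc S t x ≤ 1 := by
  intro t
  induction t with
  | zero =>
    intro x
    cases x <;> simp [AP]
  | succ t ih =>
    intro x
    cases x with
    | none => rw [AP_none]
    | some i =>
      rw [AP_succ_some]
      calc ∑ k, ker w wc S (some i) k * AP w wc S t k
          ≤ ∑ k : Option V, ker w wc S (some i) k * 1 :=
            Finset.sum_le_sum fun k _ =>
              mul_le_mul_of_nonneg_left (ih k) (ker_nonneg hw hwc hd S _ k)
        _ = 1 := by simp only [mul_one]; exact ker_rowsum hw hwc hd S i

lemma AP_mono (hw : ∀ i j, 0 < w i j) (hwc : 0 < wc) (hd : ∀ i, 0 < ∑ j, w i j) :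
    ∀ t (S₁ S₂ : Finset V), S₁ ⊆ S₂ → ∀ x, AP w wc S₁ t x ≤ AP w wc S₂ t x := by
  intro t
  induction t with
  | zero => intro S₁ S₂ _ x; rfl
  | succ t ih =>
    intro S₁ S₂ hS x
    cases x with
    | none => rw [AP_none, AP_none]
    | some i =>
      have hD := hd i
      have hW : (0:ℝ) < wc + ∑ j, w i j := by positivity
      by_cases h1 : i ∈ S₁
      · have h2 : i ∈ S₂ := hS h1
        rw [AP_succ_some', AP_succ_some']
        simp only [ker, if_pos h1, if_pos h2]
        have hsum : ∑ k : V, w i k / (wc + ∑ j, w i j) * AP w wc S₁ t (some k)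
            ≤ ∑ k : V, w i k / (wc + ∑ j, w i j) * AP w wc S₂ t (some k) :=
          Finset.sum_le_sum fun k _ =>
            mul_le_mul_of_nonneg_left (ih S₁ S₂ hS (some k))
              (div_nonneg (hw i k).le hW.le)
        linarith
      · by_cases h2 : i ∈ S₂
        · rw [AP_succ_some', AP_succ_some']
          simp only [ker, if_pos h2, if_neg h1, zero_add]
          have key : ∑ k : V, w i k / (∑ j, w i j) * AP w wc S₁ t (some k)
              - ∑ k : V, w i k / (wc + ∑ j, w i j) * AP w wc S₁ t (some k)
              ≤ wc / (wc + ∑ j, w i j) := by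
            rw [← Finset.sum_sub_distrib]
            have step : ∀ k ∈ Finset.univ (α := V),
                w i k / (∑ j, w i j) * AP w wc S₁ t (some k)
                  - w i k / (wc + ∑ j, w i j) * AP w wc S₁ t (some k)
                ≤ w i k / (∑ j, w i j) - w i k / (wc + ∑ j, w i j) := by
              intro k _
              rw [← sub_mul]
              have hc : (0:ℝ) ≤ w i k / (∑ j, w i j) - w i k / (wc + ∑ j, w i j) := by
                have : w i k / (wc + ∑ j, w i j) ≤ w i k / (∑ j, w i j) :=
                  div_le_div_of_nonneg_left (hw i k).le hD (by linarith)
                linarith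
              nlinarith [AP_le_one hw hwc hd S₁ t (some k), hc]
            calc ∑ k : V, (w i k / (∑ j, w i j) * AP w wc S₁ t (some k)
                    - w i k / (wc + ∑ j, w i j) * AP w wc S₁ t (some k))
                ≤ ∑ k : V, (w i k / (∑ j, w i j) - w i k / (wc + ∑ j, w i j)) :=
                  Finset.sum_le_sum step
              _ = wc / (wc + ∑ j, w i j) := by
                  rw [Finset.sum_sub_distrib, ← Finset.sum_div, ← Finset.sum_div,
                    div_self hD.ne']
                  field_simp
                  ring
          have hmono : ∑ k : V, w i k / (wc + ∑ j, w i j) * AP w wc S₁ t (some k)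
              ≤ ∑ k : V, w i k / (wc + ∑ j, w i j) * AP w wc S₂ t (some k) := by
            apply Finset.sum_le_sum
            intro k _
            exact mul_le_mul_of_nonneg_left (ih S₁ S₂ hS (some k))
              (div_nonneg (hw i k).le hW.le)
          linarith
        · rw [AP_succ_some', AP_succ_some']
          simp only [ker, if_neg h1, if_neg h2, zero_add]
          apply Finset.sum_le_sum
          intro k _
          exact mul_le_mul_of_nonneg_left (ih S₁ S₂ hS (some k))
            (div_nonneg (hw i k).le hD.le)

lemma AP_submod (hw : ∀ i j, 0 < w i j) (hwc : 0 < wc) (hd : ∀ i, 0 < ∑ j, w i j) :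
    ∀ t (S₁ S₂ : Finset V), S₁ ⊆ S₂ → ∀ s ∉ S₂, ∀ x,
      AP w wc (insert s S₂) t x - AP w wc S₂ t x
        ≤ AP w wc (insert s S₁) t x - AP w wc S₁ t x := by
  intro t
  induction t with
  | zero => intro S₁ S₂ _ s _ x; rfl
  | succ t ih =>
    intro S₁ S₂ hS s hs x
    have hs1 : s ∉ S₁ := fun h => hs (hS h)
    cases x with
    | none => simp [AP_none]
    | some i =>
      have hD := hd i
      have hW : (0:ℝ) < wc + ∑ j, w i j := by positivity
      have hsub : ∀ k : V, AP w wc (insert s S₂) t (some k) - AP w wc S₂ t (some k)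
          ≤ AP w wc (insert s S₁) t (some k) - AP w wc S₁ t (some k) :=
        fun k => ih S₁ S₂ hS s hs (some k)
      rw [AP_succ_some' (insert s S₂), AP_succ_some' S₂, AP_succ_some' (insert s S₁),
        AP_succ_some' S₁]
      by_cases hi1 : i ∈ S₁
      · have hi2 : i ∈ S₂ := hS hi1
        simp only [ker, if_pos hi1, if_pos hi2, if_pos (Finset.mem_insert_of_mem hi1),
          if_pos (Finset.mem_insert_of_mem hi2)]
        have : ∀ k ∈ Finset.univ (α := V),
            w i k / (wc + ∑ j, w i j) * AP w wc (insert s S₂) t (some k)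
              - w i k / (wc + ∑ j, w i j) * AP w wc S₂ t (some k)
            ≤ w i k / (wc + ∑ j, w i j) * AP w wc (insert s S₁) t (some k)
              - w i k / (wc + ∑ j, w i j) * AP w wc S₁ t (some k) := by
          intro k _
          rw [← mul_sub, ← mul_sub]
          exact mul_le_mul_of_nonneg_left (hsub k) (div_nonneg (hw i k).le hW.le)
        have h := Finset.sum_le_sum this
        rw [Finset.sum_sub_distrib, Finset.sum_sub_distrib] at h
        linarith
      · by_cases his : i = s
        · subst his
          have hiA' : i ∈ insert i S₁ := Finset.mem_insert_self i S₁
          have hiB' : i ∈ insert i S₂ := Finset.mem_insert_self i S₂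
          simp only [ker, if_neg hi1, if_neg hs, if_pos hiA', if_pos hiB']
          have : ∀ k ∈ Finset.univ (α := V),
              w i k / (wc + ∑ j, w i j) * AP w wc (insert i S₂) t (some k)
                - w i k / (∑ j, w i j) * AP w wc S₂ t (some k)
              ≤ w i k / (wc + ∑ j, w i j) * AP w wc (insert i S₁) t (some k)
                - w i k / (∑ j, w i j) * AP w wc S₁ t (some k) := by
            intro k _
            have hm : AP w wc S₁ t (some k) ≤ AP w wc S₂ t (some k) :=
              AP_mono hw hwc hd t S₁ S₂ hS (some k)
            have hc : w i k / (wc + ∑ j, w i j) ≤ w i k / (∑ j, w i j) :=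
              div_le_div_of_nonneg_left (hw i k).le hD (by linarith)
            have h1 : w i k / (wc + ∑ j, w i j) *
                (AP w wc (insert i S₂) t (some k) - AP w wc (insert i S₁) t (some k))
                ≤ w i k / (wc + ∑ j, w i j) * (AP w wc S₂ t (some k) - AP w wc S₁ t (some k)) :=
              mul_le_mul_of_nonneg_left (by linarith [hsub k])
                (div_nonneg (hw i k).le hW.le)
            have h2 : w i k / (wc + ∑ j, w i j) *
                (AP w wc S₂ t (some k) - AP w wc S₁ t (some k))
                ≤ w i k / (∑ j, w i j) * (AP w wc S₂ t (some k) - AP w wc S₁ t (some k)) :=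
              mul_le_mul_of_nonneg_right hc (by linarith)
            nlinarith [h1, h2]
          have h := Finset.sum_le_sum this
          rw [Finset.sum_sub_distrib, Finset.sum_sub_distrib] at h
          linarith
        · by_cases hi2 : i ∈ S₂
          · have hiB' : i ∈ insert s S₂ := Finset.mem_insert_of_mem hi2
            have hiA' : i ∉ insert s S₁ := by
              simp only [Finset.mem_insert]
              push_neg
              exact ⟨his, hi1⟩
            simp only [ker, if_neg hi1, if_pos hi2, if_neg hiA', if_pos hiB']
            rw [zero_add, zero_add]
            have : ∀ k ∈ Finset.univ (α := V),
                w i k / (wc + ∑ j, w i j) * AP w wc (insert s S₂) t (some k)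
                  - w i k / (wc + ∑ j, w i j) * AP w wc S₂ t (some k)
                ≤ w i k / (∑ j, w i j) * AP w wc (insert s S₁) t (some k)
                  - w i k / (∑ j, w i j) * AP w wc S₁ t (some k) := by
              intro k _
              rw [← mul_sub, ← mul_sub]
              have hnn : 0 ≤ AP w wc (insert s S₁) t (some k) - AP w wc S₁ t (some k) := by
                have := AP_mono hw hwc hd t S₁ (insert s S₁)
                  (Finset.subset_insert s S₁) (some k)
                linarith
              have hc : w i k / (wc + ∑ j, w i j) ≤ w i k / (∑ j, w i j) :=
                div_le_div_of_nonneg_left (hw i k).le hD (by linarith)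
              calc w i k / (wc + ∑ j, w i j) *
                    (AP w wc (insert s S₂) t (some k) - AP w wc S₂ t (some k))
                  ≤ w i k / (wc + ∑ j, w i j) *
                    (AP w wc (insert s S₁) t (some k) - AP w wc S₁ t (some k)) :=
                    mul_le_mul_of_nonneg_left (hsub k) (div_nonneg (hw i k).le hW.le)
                _ ≤ w i k / (∑ j, w i j) *
                    (AP w wc (insert s S₁) t (some k) - AP w wc S₁ t (some k)) :=
                    mul_le_mul_of_nonneg_right hc hnn
            have h := Finset.sum_le_sum this
            rw [Finset.sum_sub_distrib, Finset.sum_sub_distrib] at h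
            linarith
          · have hiB' : i ∉ insert s S₂ := by
              simp only [Finset.mem_insert]
              push_neg
              exact ⟨his, hi2⟩
            have hiA' : i ∉ insert s S₁ := by
              simp only [Finset.mem_insert]
              push_neg
              exact ⟨his, hi1⟩
            simp only [ker, if_neg hi1, if_neg hi2, if_neg hiA', if_neg hiB']
            rw [zero_add, zero_add]
            have : ∀ k ∈ Finset.univ (α := V),
                w i k / (∑ j, w i j) * AP w wc (insert s S₂) t (some k)
                  - w i k / (∑ j, w i j) * AP w wc S₂ t (some k)
                ≤ w i k / (∑ j, w i j) * AP w wc (insert s S₁) t (some k)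
                  - w i k / (∑ j, w i j) * AP w wc S₁ t (some k) := by
              intro k _
              rw [← mul_sub, ← mul_sub]
              exact mul_le_mul_of_nonneg_left (hsub k) (div_nonneg (hw i k).le hD.le)
            have h := Finset.sum_le_sum this
            rw [Finset.sum_sub_distrib, Finset.sum_sub_distrib] at h
            linarith

lemma AP_empty (w : V → V → ℝ) (wc : ℝ) : ∀ t (i : V), AP w wc (∅ : Finset V) t (some i) = 0 := by
  intro t
  induction t with
  | zero => intro i; simp [AP]
  | succ t ih =>
    intro i
    rw [AP_succ_some']
    simp only [ker, Finset.notMem_empty, if_false, zero_add]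
    simp [ih]

end Aux

/-- `F_AP(S) = (1/n) ∑_{i ∈ V} p_i^T(S)` is a normalized, non-decreasing,
submodular set function under the edge-addition transition model. -/
theorem FAP_normalized_monotone_submodular [Fintype V] [DecidableEq V]
    (w : V → V → ℝ) (wc : ℝ) (T : ℕ)
    (hw : ∀ i j, 0 < w i j) (hwc : 0 < wc) (hd : ∀ i, 0 < ∑ j, w i j) :
    letI FAP : Finset V → ℝ :=
      fun S => (1 / (Fintype.card V : ℝ)) * ∑ i : V, AP w wc S T (some i)
    FAP ∅ = 0 ∧
    (∀ S₁ S₂ : Finset V, S₁ ⊆ S₂ → FAP S₁ ≤ FAP S₂) ∧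
    (∀ S₁ S₂ : Finset V, S₁ ⊆ S₂ → ∀ s ∉ S₂,
      FAP (insert s S₂) - FAP S₂ ≤ FAP (insert s S₁) - FAP S₁) := by
  refine ⟨?_, ?_, ?_⟩
  · simp [AP_empty w wc T]
  · intro S₁ S₂ hS
    have hn : (0:ℝ) ≤ 1 / (Fintype.card V : ℝ) := by positivity
    apply mul_le_mul_of_nonneg_left _ hn
    exact Finset.sum_le_sum fun i _ => AP_mono hw hwc hd T S₁ S₂ hS (some i)
  · intro S₁ S₂ hS s hs
    have hn : (0:ℝ) ≤ 1 / (Fintype.card V : ℝ) := by positivity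
    have h : ∑ i : V, AP w wc (insert s S₂) T (some i) - ∑ i : V, AP w wc S₂ T (some i)
        ≤ ∑ i : V, AP w wc (insert s S₁) T (some i) - ∑ i : V, AP w wc S₁ T (some i) := by
      rw [← Finset.sum_sub_distrib, ← Finset.sum_sub_distrib]
      exact Finset.sum_le_sum fun i _ => AP_submod hw hwc hd T S₁ S₂ hS s hs (some i)
    have := mul_le_mul_of_nonneg_left h hn
    rw [mul_sub, mul_sub] at this
    exact this
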